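/- arXiv:1208.2200 — 6 statements merged into one kernel-verified Lean document; each statement's English description precedes it below -/
import Mathlib

section
/- Let X be a zero-mean real random variable with |X| ≤ a almost surely, for some a > 0, and let λ > 0. Then E[e^{λX} - 1 - λX] ≤ ((e^{λa} - 1 - λa)/a²) · E[X²]. -/
open MeasureTheory

lemma exp_shift_hasSum (u : ℝ) :
    HasSum (fun n : ℕ => u ^ (n + 2) / (Nat.factorial (n + 2) : ℝ)) (Real.exp u - 1 - u) := by
  have h := Real.exp_eq_exp_ℝ ▸ NormedSpace.expSeries_div_hasSum_exp u
  have h2 := (hasSum_nat_add_iff' (f := fun n : ℕ => u ^ n / (Nat.factorial n : ℝ)) 2).2 h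
  simpa [Finset.sum_range_succ, Nat.factorial, sub_sub] using h2

lemma key_ineq (u v : ℝ) (hv : 0 < v) (h : |u| ≤ v) :
    Real.exp u - 1 - u ≤ (Real.exp v - 1 - v) / v ^ 2 * u ^ 2 := by
  have hsu := exp_shift_hasSum u
  have hsv := (exp_shift_hasSum v).mul_left (u ^ 2 / v ^ 2)
  have heq : ∀ n : ℕ, u ^ 2 / v ^ 2 * (v ^ (n + 2) / (Nat.factorial (n + 2) : ℝ)) = u ^ 2 * v ^ n / (Nat.factorial (n + 2) : ℝ) := by
    intro n
    field_simp
    ring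
  have hle : ∀ n : ℕ, u ^ (n + 2) / (Nat.factorial (n + 2) : ℝ) ≤ u ^ 2 / v ^ 2 * (v ^ (n + 2) / (Nat.factorial (n + 2) : ℝ)) := by
    intro n
    rw [heq n]
    apply div_le_div_of_nonneg_right _ (by positivity)
    calc u ^ (n + 2) ≤ |u ^ (n + 2)| := le_abs_self _
      _ = |u| ^ 2 * |u| ^ n := by rw [abs_pow]; ring
      _ ≤ u ^ 2 * v ^ n := by
          rw [sq_abs]
          exact mul_le_mul_of_nonneg_left (pow_le_pow_left₀ (abs_nonneg u) h n) (sq_nonneg u)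
  have := hasSum_le hle hsu hsv
  calc Real.exp u - 1 - u ≤ u ^ 2 / v ^ 2 * (Real.exp v - 1 - v) := this
    _ = (Real.exp v - 1 - v) / v ^ 2 * u ^ 2 := by ring

theorem stmt_4 {Ω : Type*} [MeasurableSpace Ω] {μ : Measure Ω} [IsProbabilityMeasure μ]
    (X : Ω → ℝ) (hX : Integrable X μ) (hmean : ∫ ω, X ω ∂μ = 0)
    (a : ℝ) (ha : 0 < a) (hbound : ∀ᵐ ω ∂μ, |X ω| ≤ a)
    (l : ℝ) (hl : 0 < l) :
    ∫ ω, (Real.exp (l * X ω) - 1 - l * X ω) ∂μ ≤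
      ((Real.exp (l * a) - 1 - l * a) / a ^ 2) * ∫ ω, (X ω) ^ 2 ∂μ := by
  set C := (Real.exp (l * a) - 1 - l * a) / a ^ 2 with hC
  have hm : AEMeasurable X μ := hX.aemeasurable
  have hX2 : Integrable (fun ω => X ω ^ 2) μ := by
    refine Integrable.mono' (integrable_const (a ^ 2))
      ((hm.pow_const 2).aestronglyMeasurable) ?_
    filter_upwards [hbound] with ω hω
    rw [Real.norm_eq_abs, abs_of_nonneg (sq_nonneg _), ← sq_abs]
    exact pow_le_pow_left₀ (abs_nonneg _) hω 2
  have hf : Integrable (fun ω => Real.exp (l * X ω) - 1 - l * X ω) μ := by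
    refine Integrable.mono' (integrable_const (Real.exp (l * a) + 1 + l * a))
      ((((Real.measurable_exp.comp_aemeasurable (hm.const_mul l))).sub aemeasurable_const).sub
        (hm.const_mul l)).aestronglyMeasurable ?_
    filter_upwards [hbound] with ω hω
    have h1 : Real.exp (l * X ω) ≤ Real.exp (l * a) :=
      Real.exp_le_exp.2 (mul_le_mul_of_nonneg_left (le_trans (le_abs_self _) hω) hl.le)
    have h2 : (0:ℝ) < Real.exp (l * X ω) := Real.exp_pos _
    have h3 : |l * X ω| ≤ l * a := by
      rw [abs_mul, abs_of_pos hl]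
      exact mul_le_mul_of_nonneg_left hω hl.le
    rw [abs_le] at h3; rw [Real.norm_eq_abs, abs_le]
    constructor <;> nlinarith
  have hpt : ∀ᵐ ω ∂μ, Real.exp (l * X ω) - 1 - l * X ω ≤ C * X ω ^ 2 := by
    filter_upwards [hbound] with ω hω
    have h3 : |l * X ω| ≤ l * a := by
      rw [abs_mul, abs_of_pos hl]
      exact mul_le_mul_of_nonneg_left hω hl.le
    have := key_ineq (l * X ω) (l * a) (by positivity) h3
    calc Real.exp (l * X ω) - 1 - l * X ω
        ≤ (Real.exp (l * a) - 1 - l * a) / (l * a) ^ 2 * (l * X ω) ^ 2 := this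
      _ = C * X ω ^ 2 := by rw [hC]; field_simp
  calc ∫ ω, (Real.exp (l * X ω) - 1 - l * X ω) ∂μ
      ≤ ∫ ω, C * X ω ^ 2 ∂μ := integral_mono_ae hf (hX2.const_mul C) hpt
    _ = C * ∫ ω, X ω ^ 2 ∂μ := integral_const_mul C _
end

section
/- For all r > 0, a > 0, b > 0, exp(r/a - (r/a + b²/a²)·log(1 + ra/b²)) ≤ (e·b²/(ra))^{r/a}. -/
theorem stmt_11 (r a b : ℝ) (hr : 0 < r) (ha : 0 < a) (hb : 0 < b) :
    Real.exp (r / a - (r / a + b ^ 2 / a ^ 2) * Real.log (1 + r * a / b ^ 2)) ≤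
      (Real.exp 1 * b ^ 2 / (r * a)) ^ (r / a) := by
  have hb2 : (0:ℝ) < b^2 := by positivity
  have hu : 0 < r*a/b^2 := by positivity
  rw [show Real.exp 1 * b^2/(r*a) = Real.exp 1 / (r*a/b^2) by field_simp]
  rw [Real.rpow_def_of_pos (by positivity), Real.exp_le_exp,
    Real.log_div (Real.exp_ne_zero 1) (ne_of_gt hu), Real.log_exp]
  have h1 : Real.log (r*a/b^2) ≤ Real.log (1 + r*a/b^2) :=
    Real.log_le_log hu (by linarith)
  have h2 : 0 ≤ Real.log (1 + r*a/b^2) := Real.log_nonneg (by linarith)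
  have ht : 0 < r/a := by positivity
  have hc : 0 < b^2/a^2 := by positivity
  nlinarith [mul_le_mul_of_nonneg_left h1 (le_of_lt ht), mul_nonneg (le_of_lt hc) h2]
end

section
/- Let u : ℝ → ℝ be twice differentiable with |u'(t)| ≤ c and (u²)''(t) ≤ 2D²c² for all t, where c > 0 and D ≥ 1, and suppose u ≥ 0. Then for all t, (cosh ∘ u)''(t) ≤ D²c²·cosh(u(t)). -/
lemma sinh_le_mul_cosh (x : ℝ) (hx : 0 ≤ x) : Real.sinh x ≤ x * Real.cosh x := by
  have key : MonotoneOn (fun z : ℝ => z * Real.cosh z - Real.sinh z) (Set.Ici 0) := by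
    have hd : ∀ z : ℝ, HasDerivAt (fun z : ℝ => z * Real.cosh z - Real.sinh z)
        (z * Real.sinh z) z := by
      intro z
      have h1 : HasDerivAt (fun z : ℝ => z * Real.cosh z)
          (1 * Real.cosh z + z * Real.sinh z) z :=
        (hasDerivAt_id z).mul (Real.hasDerivAt_cosh z)
      have := h1.sub (Real.hasDerivAt_sinh z)
      exact this.congr_deriv (by ring)
    apply monotoneOn_of_deriv_nonneg (convex_Ici 0)
    · exact (Continuous.sub (continuous_id.mul Real.continuous_cosh) Real.continuous_sinh).continuousOn
    · intro z _
      exact ((hd z).differentiableAt).differentiableWithinAt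
    · intro z hz
      rw [(hd z).deriv]
      exact mul_nonneg (le_of_lt (by simpa using hz)) (Real.sinh_nonneg_iff.mpr (le_of_lt (by simpa using hz)))
  have := key (Set.self_mem_Ici) (Set.mem_Ici.mpr hx) hx
  simpa using this

theorem stmt_12 (u : ℝ → ℝ) (c D : ℝ) (hc : 0 < c) (hD : 1 ≤ D)
    (hu : Differentiable ℝ u) (hu2 : Differentiable ℝ (deriv u))
    (hpos : ∀ t, 0 ≤ u t)
    (hu' : ∀ t, |deriv u t| ≤ c)
    (husq : ∀ t, deriv (deriv (fun s => (u s) ^ 2)) t ≤ 2 * D ^ 2 * c ^ 2) :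
    ∀ t, deriv (deriv (fun s => Real.cosh (u s))) t ≤ D ^ 2 * c ^ 2 * Real.cosh (u t) := by
  intro t
  -- first derivatives
  have hd1 : deriv (fun s => Real.cosh (u s)) = fun s => Real.sinh (u s) * deriv u s := by
    funext s
    exact ((Real.hasDerivAt_cosh (u s)).comp s (hu s).hasDerivAt).deriv
  have hd2 : deriv (fun s => (u s) ^ 2) = fun s => 2 * u s * deriv u s := by
    funext s
    have : HasDerivAt (fun s => (u s) ^ 2) (2 * u s ^ 1 * deriv u s) s :=
      (hu s).hasDerivAt.pow 2
    simpa using this.deriv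
  -- second derivatives
  have hdd1 : deriv (deriv (fun s => Real.cosh (u s))) t =
      Real.cosh (u t) * (deriv u t) ^ 2 + Real.sinh (u t) * deriv (deriv u) t := by
    rw [hd1]
    have h : HasDerivAt (fun s => Real.sinh (u s) * deriv u s)
        (Real.cosh (u t) * deriv u t * deriv u t + Real.sinh (u t) * deriv (deriv u) t) t :=
      (((Real.hasDerivAt_sinh (u t)).comp t (hu t).hasDerivAt)).mul (hu2 t).hasDerivAt
    rw [h.deriv]; ring
  have hdd2 : deriv (deriv (fun s => (u s) ^ 2)) t =
      2 * (deriv u t) ^ 2 + 2 * u t * deriv (deriv u) t := by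
    rw [hd2]
    have h : HasDerivAt (fun s => 2 * u s * deriv u s)
        (2 * deriv u t * deriv u t + 2 * u t * deriv (deriv u) t) t := by
      have := ((hasDerivAt_const t (2:ℝ)).mul (hu t).hasDerivAt).mul (hu2 t).hasDerivAt
      exact this.congr_deriv (by simp only [Pi.mul_apply]; ring)
    rw [h.deriv]; ring
  rw [hdd1]
  have hcosh : (0:ℝ) < Real.cosh (u t) := Real.cosh_pos (u t)
  have hsinh : 0 ≤ Real.sinh (u t) := Real.sinh_nonneg_iff.mpr (hpos t)
  have hsq : (deriv u t) ^ 2 ≤ c ^ 2 := by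
    have := sq_abs (deriv u t)
    nlinarith [hu' t, abs_nonneg (deriv u t)]
  have hquad : (deriv u t) ^ 2 + u t * deriv (deriv u) t ≤ D ^ 2 * c ^ 2 := by
    have := husq t; rw [hdd2] at this; linarith
  rcases le_or_gt 0 (deriv (deriv u) t) with h2 | h2
  · -- u'' ≥ 0 : use sinh u ≤ u cosh u
    have hs : Real.sinh (u t) * deriv (deriv u) t ≤ u t * Real.cosh (u t) * deriv (deriv u) t :=
      mul_le_mul_of_nonneg_right (sinh_le_mul_cosh (u t) (hpos t)) h2
    nlinarith [hcosh, hquad]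
  · -- u'' < 0
    have hs : Real.sinh (u t) * deriv (deriv u) t ≤ 0 :=
      mul_nonpos_of_nonneg_of_nonpos hsinh h2.le
    have hD2 : c ^ 2 ≤ D ^ 2 * c ^ 2 := by nlinarith [mul_le_mul hD hD (by norm_num : (0:ℝ) ≤ 1) (by linarith : (0:ℝ) ≤ D), sq_nonneg c]
    nlinarith [mul_le_mul_of_nonneg_left hsq hcosh.le]
end

section
/- Let μ be a measure on a measurable space T, p ≥ 2, and x, v ∈ L^p(μ) real-valued with x ≠ 0. Then (p-1)·‖x‖^{2-p}·∫ |x|^{p-2} v² dμ - (p-2)·‖x‖^{2-2p}·(∫ |x|^{p-2} x v dμ)² ≤ (p-1)·‖v‖², where ‖·‖ is the L^p norm. -/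
open MeasureTheory ENNReal

theorem stmt_15 {T : Type*} [MeasurableSpace T] (μ : Measure T)
    (p : ℝ) (hp : 2 ≤ p) (x v : T → ℝ)
    (hx : MemLp x (ENNReal.ofReal p) μ) (hv : MemLp v (ENNReal.ofReal p) μ)
    (hx0 : ¬ x =ᵐ[μ] 0) :
    (p - 1) * (eLpNorm x (ENNReal.ofReal p) μ).toReal ^ (2 - p) *
        ∫ t, |x t| ^ (p - 2) * (v t) ^ 2 ∂μ -
      (p - 2) * (eLpNorm x (ENNReal.ofReal p) μ).toReal ^ (2 - 2 * p) *
        (∫ t, |x t| ^ (p - 2) * x t * v t ∂μ) ^ 2 ≤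
      (p - 1) * (eLpNorm v (ENNReal.ofReal p) μ).toReal ^ 2 := by
  have hp0 : (0:ℝ) < p := by linarith
  set N := (eLpNorm x (ENNReal.ofReal p) μ).toReal with hNdef
  set M := (eLpNorm v (ENNReal.ofReal p) μ).toReal with hMdef
  have hpne : ENNReal.ofReal p ≠ 0 := by
    simp only [ne_eq, ENNReal.ofReal_eq_zero, not_le]; linarith
  have hptop : ENNReal.ofReal p ≠ ∞ := ENNReal.ofReal_ne_top
  have htor : (ENNReal.ofReal p).toReal = p := ENNReal.toReal_ofReal hp0.le
  have hNpos : 0 < N := by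
    refine ENNReal.toReal_pos (fun h => ?_) hx.2.ne
    exact hx0 ((eLpNorm_eq_zero_iff hx.1 hpne).mp h)
  have hM0 : 0 ≤ M := ENNReal.toReal_nonneg
  have hIx0 : 0 ≤ ∫ t, |x t| ^ p ∂μ := integral_nonneg fun t => by positivity
  have hIv0 : 0 ≤ ∫ t, |v t| ^ p ∂μ := integral_nonneg fun t => by positivity
  have hNx : N = (∫ t, |x t| ^ p ∂μ) ^ p⁻¹ := by
    rw [hNdef, hx.eLpNorm_eq_integral_rpow_norm hpne hptop, htor,
      ENNReal.toReal_ofReal (by positivity)]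
    simp only [Real.norm_eq_abs]
  have hMv : M = (∫ t, |v t| ^ p ∂μ) ^ p⁻¹ := by
    rw [hMdef, hv.eLpNorm_eq_integral_rpow_norm hpne hptop, htor,
      ENNReal.toReal_ofReal (by positivity)]
    simp only [Real.norm_eq_abs]
  -- key Hölder inequality
  have key : ∫ t, |x t| ^ (p - 2) * (v t) ^ 2 ∂μ ≤ N ^ (p - 2) * M ^ 2 := by
    rcases eq_or_lt_of_le hp with hp2 | hp2
    · -- p = 2
      subst hp2
      have h1 : ∫ t, |x t| ^ ((2:ℝ) - 2) * (v t) ^ 2 ∂μ = ∫ t, (v t) ^ 2 ∂μ := by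
        refine integral_congr_ae (Filter.Eventually.of_forall fun t => ?_)
        norm_num
      have h2 : ∫ t, (v t) ^ 2 ∂μ = M ^ 2 := by
        have hv2 : ∫ t, |v t| ^ (2:ℝ) ∂μ = ∫ t, (v t) ^ 2 ∂μ := by
          refine integral_congr_ae (Filter.Eventually.of_forall fun t => ?_)
          show |v t| ^ (2:ℝ) = v t ^ 2
          rw [show ((2:ℝ)) = ((2:ℕ):ℝ) by norm_num, Real.rpow_natCast, sq_abs]
        have hI0 : 0 ≤ ∫ t, (v t) ^ 2 ∂μ := integral_nonneg fun t => sq_nonneg _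
        rw [hMv, hv2, ← Real.rpow_natCast ((∫ t, (v t) ^ 2 ∂μ) ^ ((2:ℝ))⁻¹) 2,
          ← Real.rpow_mul hI0]
        norm_num
      rw [h1, h2]
      norm_num
    · -- p > 2
      have hpm2 : (0:ℝ) < p - 2 := by linarith
      have hpq : Real.HolderConjugate (p / (p - 2)) (p / 2) := by
        rw [Real.holderConjugate_iff]
        constructor
        · rw [one_lt_div hpm2]; linarith
        · field_simp; ring
      have hf : MemLp (fun t => |x t| ^ (p - 2)) (ENNReal.ofReal (p / (p - 2))) μ := by
        have := hx.norm_rpow_div (ENNReal.ofReal (p - 2))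
        rw [ENNReal.toReal_ofReal hpm2.le] at this
        rw [ENNReal.ofReal_div_of_pos hpm2]
        simpa only [Real.norm_eq_abs] using this
      have hg : MemLp (fun t => (v t) ^ 2) (ENNReal.ofReal (p / 2)) μ := by
        have := hv.norm_rpow_div (ENNReal.ofReal 2)
        rw [ENNReal.toReal_ofReal (by norm_num : (0:ℝ) ≤ 2)] at this
        rw [ENNReal.ofReal_div_of_pos (by norm_num : (0:ℝ) < 2)]
        refine MemLp.ae_eq ?_ this
        refine Filter.Eventually.of_forall fun t => ?_
        simp only [Real.norm_eq_abs]
        rw [show ((2:ℝ)) = ((2:ℕ):ℝ) by norm_num, Real.rpow_natCast, sq_abs]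
      have hfn : 0 ≤ᵐ[μ] fun t => |x t| ^ (p - 2) :=
        Filter.Eventually.of_forall fun t => by positivity
      have hgn : 0 ≤ᵐ[μ] fun t => (v t) ^ 2 :=
        Filter.Eventually.of_forall fun t => sq_nonneg _
      have H := integral_mul_le_Lp_mul_Lq_of_nonneg hpq hfn hgn hf hg
      have e1 : ∫ t, (|x t| ^ (p - 2)) ^ (p / (p - 2)) ∂μ = ∫ t, |x t| ^ p ∂μ := by
        refine integral_congr_ae (Filter.Eventually.of_forall fun t => ?_)
        show (|x t| ^ (p - 2)) ^ (p / (p - 2)) = |x t| ^ p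
        rw [← Real.rpow_mul (abs_nonneg _)]
        congr 1
        field_simp
      have e2 : ∫ t, ((v t) ^ 2) ^ (p / 2) ∂μ = ∫ t, |v t| ^ p ∂μ := by
        refine integral_congr_ae (Filter.Eventually.of_forall fun t => ?_)
        show ((v t) ^ 2 : ℝ) ^ (p / 2) = |v t| ^ p
        rw [← sq_abs, ← Real.rpow_natCast (|v t|) 2, ← Real.rpow_mul (abs_nonneg _)]
        congr 1
        push_cast
        field_simp
      rw [e1, e2] at H
      have e3 : (∫ t, |x t| ^ p ∂μ) ^ (1 / (p / (p - 2))) = N ^ (p - 2) := by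
        rw [hNx, ← Real.rpow_mul hIx0]
        congr 1
        field_simp
      have e4 : (∫ t, |v t| ^ p ∂μ) ^ (1 / (p / 2)) = M ^ 2 := by
        rw [hMv, ← Real.rpow_natCast ((∫ t, |v t| ^ p ∂μ) ^ p⁻¹) 2,
          ← Real.rpow_mul hIv0]
        congr 1
        push_cast
        field_simp
      rw [e3, e4] at H
      exact H
  have hsub : 0 ≤ (p - 2) * N ^ (2 - 2 * p) * (∫ t, |x t| ^ (p - 2) * x t * v t ∂μ) ^ 2 :=
    mul_nonneg (mul_nonneg (by linarith) (Real.rpow_nonneg hNpos.le _)) (sq_nonneg _)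
  have hmain : (p - 1) * N ^ (2 - p) * ∫ t, |x t| ^ (p - 2) * (v t) ^ 2 ∂μ
      ≤ (p - 1) * M ^ 2 := by
    have hc : 0 ≤ (p - 1) * N ^ (2 - p) :=
      mul_nonneg (by linarith) (Real.rpow_nonneg hNpos.le _)
    calc (p - 1) * N ^ (2 - p) * ∫ t, |x t| ^ (p - 2) * (v t) ^ 2 ∂μ
        ≤ (p - 1) * N ^ (2 - p) * (N ^ (p - 2) * M ^ 2) :=
          mul_le_mul_of_nonneg_left key hc
      _ = (p - 1) * (N ^ (2 - p) * N ^ (p - 2)) * M ^ 2 := by ring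
      _ = (p - 1) * M ^ 2 := by
          rw [← Real.rpow_add hNpos]
          norm_num
  linarith
end

section
/- Let X₁, ..., X_n be independent Bochner-integrable random vectors in a separable Banach space X, let f_n = X₁ + ... + X_n, let F_j be the σ-field generated by X₁, ..., X_j, and set ζ_j = E[‖f_n‖ | F_j] - E‖f_n‖. Then (ζ_j)_{j=0}^n is a martingale with ζ_0 = 0, ζ_n = ‖f_n‖ - E‖f_n‖, and its increments ξ_j = ζ_j - ζ_{j-1} satisfy |ξ_j| ≤ ‖X_j‖ + E‖X_j‖ almost surely and E[ξ_j² | F_{j-1}] ≤ E‖X_j‖² almost surely. -/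
open MeasureTheory ProbabilityTheory
open scoped ENNReal

section Wrap
variable {α : Type*} {m : MeasurableSpace α} {μ : Measure α}

lemma wIndicatorInt {f : α → ℝ} (h : Integrable f μ) {s : Set α} (hs : MeasurableSet s) :
    Integrable (s.indicator f) μ := h.indicator hs

lemma wIntegrableOn {f : α → ℝ} (h : Integrable f μ) {s : Set α} :
    IntegrableOn f s μ := h.integrableOn

lemma wIntegralIndicator {f : α → ℝ} {s : Set α} (hs : MeasurableSet s) :
    ∫ x, s.indicator f x ∂μ = ∫ x in s, f x ∂μ := integral_indicator hs

lemma wSetIntegralConst [IsProbabilityMeasure μ] {s : Set α} :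
    ∫ _ in s, (1:ℝ) ∂μ = (μ s).toReal := by simp [Measure.real]

lemma wSetIntegralCompl {f : α → ℝ} {s : Set α} (hs : MeasurableSet s) (hfi : Integrable f μ) :
    ∫ x in sᶜ, f x ∂μ = ∫ x, f x ∂μ - ∫ x in s, f x ∂μ := setIntegral_compl hs hfi

lemma wIntegralUnion {f : α → ℝ} {s : ℕ → Set α} (hm : ∀ i, MeasurableSet (s i))
    (hd : Pairwise (Function.onFun Disjoint s)) (hfi : Integrable f μ) :
    ∫ x in ⋃ n, s n, f x ∂μ = ∑' n, ∫ x in s n, f x ∂μ := integral_iUnion hm hd hfi.integrableOn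

end Wrap

section Wrap2
variable {α : Type*} {m : MeasurableSpace α} {μ : Measure α}

lemma wNormSM {E : Type*} [NormedAddCommGroup E] [MeasurableSpace E] [BorelSpace E]
    {f : α → E} (h : Measurable[m] f) : StronglyMeasurable[m] fun x => ‖f x‖ :=
  h.norm.stronglyMeasurable

lemma wNormSqSM {E : Type*} [NormedAddCommGroup E] [MeasurableSpace E] [BorelSpace E]
    {f : α → E} (h : Measurable[m] f) : StronglyMeasurable[m] fun x => ‖f x‖ ^ 2 :=
  (h.norm.pow_const 2).stronglyMeasurable

lemma wNormSqASM {E : Type*} [NormedAddCommGroup E] [MeasurableSpace E] [BorelSpace E]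
    {f : α → E} (h : Measurable[m] f) : AEStronglyMeasurable (fun x => ‖f x‖ ^ 2) μ :=
  (h.norm.pow_const 2).aestronglyMeasurable

lemma wOfRealSq {E : Type*} [NormedAddCommGroup E] [MeasurableSpace E] [BorelSpace E]
    {f : α → E} (h : Measurable[m] f) :
    Measurable[m] fun x => ENNReal.ofReal (‖f x‖ ^ 2) :=
  ENNReal.measurable_ofReal.comp (h.norm.pow_const 2)

lemma wAbsIic {f : α → ℝ} (h : Measurable[m] f) (K : ℝ) :
    MeasurableSet[m] {ω | |f ω| ≤ K} :=
  h.abs measurableSet_Iic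

lemma wConstIndMeas {s : Set α} (hs : MeasurableSet s) :
    Measurable[m] (s.indicator fun _ => (1:ℝ≥0∞)) :=
  measurable_const.indicator hs

lemma wIndASM {f : α → ℝ} (h : AEStronglyMeasurable f μ) {s : Set α} (hs : MeasurableSet s) :
    AEStronglyMeasurable (s.indicator f) μ :=
  h.indicator hs

lemma wLintInd {s : Set α} (hs : MeasurableSet s) (f : α → ℝ≥0∞) :
    ∫⁻ x, s.indicator f x ∂μ = ∫⁻ x in s, f x ∂μ :=
  lintegral_indicator hs f

end Wrap2

section Aux

variable {Ω : Type*} {m0 : MeasurableSpace Ω} {μ : Measure Ω} [IsProbabilityMeasure μ]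

lemma myAbs_condexp_le {m : MeasurableSpace Ω} {f : Ω → ℝ} (hf : Integrable f μ) :
    ∀ᵐ ω ∂μ, |(μ[f|m]) ω| ≤ (μ[(fun ω => |f ω|)|m]) ω := by
  filter_upwards [condExp_mono hf hf.abs (ae_of_all μ fun x => le_abs_self (f x)),
    condExp_mono hf.neg hf.abs (ae_of_all μ fun x => neg_le_abs (f x)),
    condExp_neg (m := m) f] with x hx₁ hx₂ hx₃
  rw [hx₃, Pi.neg_apply] at hx₂
  rw [abs_le]
  constructor <;> linarith

lemma myCondexp_sup_of_indep {m₁ mX M : MeasurableSpace Ω} (hm₁M : m₁ ≤ M) (hM : M ≤ m0)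
    (hXle : mX ≤ m0) (hind : Indep M mX μ) {g : Ω → ℝ}
    (hgm : StronglyMeasurable[M] g) (hgi : Integrable g μ) :
    μ[g | m₁ ⊔ mX] =ᵐ[μ] μ[g | m₁] := by
  have hm₁ : m₁ ≤ m0 := hm₁M.trans hM
  have hsup : m₁ ⊔ mX ≤ m0 := sup_le hm₁ hXle
  set π : Set (Set Ω) :=
    {s | ∃ s₁ s₂, MeasurableSet[m₁] s₁ ∧ MeasurableSet[mX] s₂ ∧ s = s₁ ∩ s₂} with hπ
  have hgen : m₁ ⊔ mX = MeasurableSpace.generateFrom π := by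
    refine le_antisymm (sup_le ?_ ?_) (MeasurableSpace.generateFrom_le ?_)
    · intro s hs
      exact MeasurableSpace.measurableSet_generateFrom
        ⟨s, Set.univ, hs, MeasurableSet.univ, (Set.inter_univ s).symm⟩
    · intro s hs
      exact MeasurableSpace.measurableSet_generateFrom
        ⟨Set.univ, s, MeasurableSet.univ, hs, (Set.univ_inter s).symm⟩
    · rintro s ⟨s₁, s₂, h₁, h₂, rfl⟩
      exact MeasurableSet.inter ((le_sup_left : m₁ ≤ m₁ ⊔ mX) _ h₁)
        ((le_sup_right : mX ≤ m₁ ⊔ mX) _ h₂)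
  have hpi : IsPiSystem π := by
    rintro s ⟨s₁, s₂, h₁, h₂, rfl⟩ t ⟨t₁, t₂, h₁', h₂', rfl⟩ -
    exact ⟨s₁ ∩ t₁, s₂ ∩ t₂, h₁.inter h₁', h₂.inter h₂', by
      rw [Set.inter_inter_inter_comm]⟩
  -- product formula for integrals over sets in π
  have hprod : ∀ (h : Ω → ℝ), StronglyMeasurable[M] h → Integrable h μ →
      ∀ s₁ s₂, MeasurableSet[m₁] s₁ → MeasurableSet[mX] s₂ →
      ∫ x in s₁ ∩ s₂, h x ∂μ = (∫ x in s₁, h x ∂μ) * (μ s₂).toReal := by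
    intro h hhm hhi s₁ s₂ h₁ h₂
    have hs₁M : MeasurableSet[M] s₁ := hm₁M _ h₁
    have h1m : StronglyMeasurable[M] (s₁.indicator h) := hhm.indicator hs₁M
    have h2m : StronglyMeasurable[mX] (s₂.indicator (fun _ => (1:ℝ))) :=
      stronglyMeasurable_const.indicator h₂
    have h1meas : Measurable[M] (s₁.indicator h) := h1m.measurable
    have h2meas : Measurable[mX] (s₂.indicator (fun _ => (1:ℝ))) := h2m.measurable
    have hindf : IndepFun (s₁.indicator h) (s₂.indicator (fun _ => (1:ℝ))) μ :=
      indep_of_indep_of_le_left (indep_of_indep_of_le_right hind h2meas.comap_le) h1meas.comap_le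
    have hi1 : Integrable (s₁.indicator h) μ := wIndicatorInt hhi (hM _ hs₁M)
    have hi2 : Integrable (s₂.indicator (fun _ => (1:ℝ))) μ :=
      wIndicatorInt (integrable_const (1:ℝ)) (hXle _ h₂)
    have hmul := IndepFun.integral_mul_eq_mul_integral hindf hi1.1 hi2.1
    have hptw : (s₁.indicator h) * (s₂.indicator (fun _ => (1:ℝ))) =
        (s₁ ∩ s₂).indicator h := by
      funext x
      by_cases hx1 : x ∈ s₁ <;> by_cases hx2 : x ∈ s₂ <;>
        simp [Set.indicator_apply, hx1, hx2, Set.mem_inter_iff]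
    rw [hptw] at hmul
    rw [← wIntegralIndicator ((hm₁ _ h₁).inter (hXle _ h₂)), hmul,
      wIntegralIndicator (hm₁ _ h₁), wIntegralIndicator (hXle _ h₂), wSetIntegralConst]
  -- the set-integral equality on all of m₁ ⊔ mX
  have hP : ∀ ⦃s : Set Ω⦄, MeasurableSet[m₁ ⊔ mX] s →
      ∫ x in s, (μ[g|m₁]) x ∂μ = ∫ x in s, g x ∂μ := by
    have hgm' : StronglyMeasurable[M] (μ[g|m₁]) := stronglyMeasurable_condExp.mono hm₁M
    refine MeasurableSpace.induction_on_inter (m := m₁ ⊔ mX) hgen hpi ?_ ?_ ?_ ?_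
    · simp
    · rintro s ⟨s₁, s₂, h₁, h₂, rfl⟩
      rw [hprod _ hgm' integrable_condExp s₁ s₂ h₁ h₂, hprod _ hgm hgi s₁ s₂ h₁ h₂,
        setIntegral_condExp hm₁ hgi h₁]
    · intro t ht hteq
      rw [wSetIntegralCompl (hsup _ ht) integrable_condExp,
        wSetIntegralCompl (hsup _ ht) hgi, hteq, integral_condExp hm₁]
    · intro f hdisj hfm hfeq
      rw [wIntegralUnion (fun i => hsup _ (hfm i)) hdisj integrable_condExp,
        wIntegralUnion (fun i => hsup _ (hfm i)) hdisj hgi]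
      exact tsum_congr hfeq
  exact (ae_eq_condExp_of_forall_setIntegral_eq hsup hgi
    (fun s _ _ => wIntegrableOn integrable_condExp)
    (fun s hs _ => hP hs)
    ((StronglyMeasurable.mono (m := m₁ ⊔ mX) (m' := m₁) stronglyMeasurable_condExp (le_sup_left : m₁ ≤ m₁ ⊔ mX)).aestronglyMeasurable)).symm

end Aux

theorem stmt_17 {Ω : Type*} {m0 : MeasurableSpace Ω} {μ : Measure Ω} [IsProbabilityMeasure μ]
    {E : Type*} [NormedAddCommGroup E] [NormedSpace ℝ E] [CompleteSpace E]
    [MeasurableSpace E] [BorelSpace E] [SecondCountableTopology E]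
    (n : ℕ) (X : ℕ → Ω → E)
    (hmeas : ∀ i, Measurable (X i))
    (hint : ∀ i, Integrable (X i) μ)
    (hindep : iIndepFun X μ)
    (ℱ : ℕ → MeasurableSpace Ω)
    (hℱ : ∀ j, ℱ j = MeasurableSpace.comap (fun ω (i : Fin j) => X (i + 1) ω)
      MeasurableSpace.pi)
    (S : Ω → ℝ) (hS : S = fun ω => ‖∑ i ∈ Finset.Icc 1 n, X i ω‖)
    (ζ : ℕ → Ω → ℝ)
    (hζ : ζ = fun j ω => (μ[S | ℱ j]) ω - ∫ ω', S ω' ∂μ) :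
    (ζ 0 =ᵐ[μ] 0) ∧
    (ζ n =ᵐ[μ] fun ω => S ω - ∫ ω', S ω' ∂μ) ∧
    (∀ j ∈ Finset.Icc 1 n, μ[ζ j | ℱ (j - 1)] =ᵐ[μ] ζ (j - 1)) ∧
    (∀ j ∈ Finset.Icc 1 n, ∀ᵐ ω ∂μ,
      |ζ j ω - ζ (j - 1) ω| ≤ ‖X j ω‖ + ∫ ω', ‖X j ω'‖ ∂μ) ∧
    (∀ j ∈ Finset.Icc 1 n, ∀ᵐ ω ∂μ,
      (μ[fun ω' => (ζ j ω' - ζ (j - 1) ω') ^ 2 | ℱ (j - 1)]) ω ≤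
        ∫ ω', ‖X j ω'‖ ^ 2 ∂μ) := by
  classical
  set 𝒢 : ℕ → MeasurableSpace Ω := fun i => MeasurableSpace.comap (X i) inferInstance with h𝒢
  have hGle : ∀ i, 𝒢 i ≤ m0 := fun i => (hmeas i).comap_le
  have hiIndep : iIndep 𝒢 μ := hindep
  have hFeq : ∀ j, ℱ j = ⨆ i ∈ Set.Icc 1 j, 𝒢 i := by
    intro j
    rw [hℱ j]
    have h1 : (MeasurableSpace.pi : MeasurableSpace (Fin j → E)) =
        ⨆ i : Fin j, MeasurableSpace.comap (fun f : Fin j → E => f i) inferInstance := rfl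
    rw [h1, MeasurableSpace.comap_iSup]
    have h2 : ∀ i : Fin j,
        (MeasurableSpace.comap (fun f : Fin j → E => f i) inferInstance).comap
          (fun ω (k : Fin j) => X (k + 1) ω) = 𝒢 ((i : ℕ) + 1) := fun i =>
      MeasurableSpace.comap_comp
    have hrange : Set.Icc 1 j = Set.range (fun i : Fin j => (i : ℕ) + 1) := by
      ext k
      simp only [Set.mem_Icc, Set.mem_range]
      constructor
      · rintro ⟨h1k, hkj⟩
        refine ⟨⟨k - 1, by omega⟩, ?_⟩
        simp only [Fin.val_mk]
        omega
      · rintro ⟨i, rfl⟩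
        have := i.isLt
        omega
    rw [hrange, iSup_range]
    exact iSup_congr h2
  have hFle : ∀ j, ℱ j ≤ m0 := by
    intro j
    rw [hFeq j]
    exact iSup₂_le fun i _ => hGle i
  have hFmono : ∀ a b : ℕ, a ≤ b → ℱ a ≤ ℱ b := by
    intro a b hab
    rw [hFeq a, hFeq b]
    exact biSup_mono (Set.Icc_subset_Icc_right hab)
  have hSM : ∀ (t : Finset ℕ) (m : MeasurableSpace Ω), (∀ i ∈ t, 𝒢 i ≤ m) →
      StronglyMeasurable[m] fun ω => ‖∑ i ∈ t, X i ω‖ := by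
    intro t m hm
    have hXm : ∀ i ∈ t, Measurable[m] (X i) := fun i hi => Measurable.of_comap_le (hm i hi)
    exact (Finset.measurable_sum t hXm).norm.stronglyMeasurable
  have hSint : Integrable S μ := by
    rw [hS]
    exact (integrable_finset_sum _ fun i _ => hint i).norm
  have hmain : ∀ j ∈ Finset.Icc 1 n,
      (∀ᵐ ω ∂μ, |ζ j ω - ζ (j - 1) ω| ≤ ‖X j ω‖ + ∫ ω', ‖X j ω'‖ ∂μ) ∧
      (∀ᵐ ω ∂μ, (μ[fun ω' => (ζ j ω' - ζ (j - 1) ω') ^ 2 | ℱ (j - 1)]) ω ≤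
        ∫ ω', ‖X j ω'‖ ^ 2 ∂μ) := by
    intro j hj
    obtain ⟨hj1, hjn⟩ := Finset.mem_Icc.1 hj
    have hle : ℱ (j - 1) ≤ ℱ j := hFmono _ _ (by omega)
    set t : Finset ℕ := (Finset.Icc 1 n).erase j with ht
    set g : Ω → ℝ := fun ω => ‖∑ i ∈ t, X i ω‖ with hgdef
    set η : Ω → ℝ := fun ω => S ω - g ω with hηdef
    have hgi : Integrable g μ := (integrable_finset_sum _ fun i _ => hint i).norm
    have hηi : Integrable η μ := hSint.sub hgi
    have hsum : ∀ ω, ∑ i ∈ Finset.Icc 1 n, X i ω = X j ω + ∑ i ∈ t, X i ω := fun ω =>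
      (Finset.add_sum_erase _ _ hj).symm
    have hη_abs : ∀ ω, |η ω| ≤ ‖X j ω‖ := by
      intro ω
      have h := abs_norm_sub_norm_le (X j ω + ∑ i ∈ t, X i ω) (∑ i ∈ t, X i ω)
      simp only [add_sub_cancel_right] at h
      simpa [hηdef, hgdef, hS, hsum ω] using h
    have hη_low : ∀ ω, ‖X j ω‖ - 2 * g ω ≤ η ω := by
      intro ω
      have h1 : ‖X j ω‖ ≤ ‖X j ω + ∑ i ∈ t, X i ω‖ + ‖∑ i ∈ t, X i ω‖ := by
        have h2 := norm_sub_le (X j ω + ∑ i ∈ t, X i ω) (∑ i ∈ t, X i ω)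
        simp only [add_sub_cancel_right] at h2
        linarith
      have h2 : η ω = ‖X j ω + ∑ i ∈ t, X i ω‖ - ‖∑ i ∈ t, X i ω‖ := by
        simp [hηdef, hgdef, hS, hsum ω]
      have h3 : g ω = ‖∑ i ∈ t, X i ω‖ := by rw [hgdef]
      rw [h2, h3]
      linarith
    set M : MeasurableSpace Ω := ⨆ i ∈ ({j}ᶜ : Set ℕ), 𝒢 i with hMdef
    have hMle : M ≤ m0 := iSup₂_le fun i _ => hGle i
    have hGM : ℱ (j - 1) ≤ M := by
      rw [hFeq]
      refine biSup_mono fun i hi => ?_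
      simp only [Set.mem_Icc] at hi
      simp only [Set.mem_compl_iff, Set.mem_singleton_iff]
      omega
    have hgm : StronglyMeasurable[M] g := by
      rw [hgdef]
      refine hSM t M fun i hi => ?_
      refine le_biSup _ ?_
      have h := (Finset.mem_erase.1 hi).1
      simpa only [Set.mem_compl_iff, Set.mem_singleton_iff] using h
    have hindMj : Indep M (𝒢 j) μ := by
      have h := indep_iSup_of_disjoint hGle hiIndep
        (S := ({j}ᶜ : Set ℕ)) (T := {j}) disjoint_compl_left
      simpa [hMdef, iSup_singleton] using h
    have hsplit : ℱ j = ℱ (j - 1) ⊔ 𝒢 j := by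
      rw [hFeq j, hFeq (j - 1)]
      have hins : Set.Icc 1 j = insert j (Set.Icc 1 (j - 1)) := by
        ext k
        simp only [Set.mem_Icc, Set.mem_insert_iff]
        omega
      rw [hins, iSup_insert]
      exact sup_comm _ _
    have hdrop : μ[g|ℱ j] =ᵐ[μ] μ[g|ℱ (j - 1)] := by
      rw [hsplit]
      exact myCondexp_sup_of_indep hGM hMle (hGle j) hindMj hgm hgi
    have hindGj : Indep (𝒢 j) (ℱ (j - 1)) μ := by
      have h := indep_iSup_of_disjoint hGle hiIndep
        (S := ({j} : Set ℕ)) (T := Set.Icc 1 (j - 1)) (by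
          rw [Set.disjoint_left]
          intro a ha hb
          simp only [Set.mem_singleton_iff] at ha
          simp only [Set.mem_Icc] at hb
          omega)
      rw [hFeq]
      simpa [iSup_singleton] using h
    have hXjmeas : Measurable[𝒢 j] (X j) := Measurable.of_comap_le le_rfl
    have hXnm : StronglyMeasurable[𝒢 j] fun ω => ‖X j ω‖ := wNormSM hXjmeas
    have hXjint : Integrable (fun ω => ‖X j ω‖) μ := (hint j).norm
    have hGjF : 𝒢 j ≤ ℱ j := by rw [hsplit]; exact le_sup_right
    have hnormF : μ[(fun ω => ‖X j ω‖)|ℱ j] = fun ω => ‖X j ω‖ :=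
      condExp_of_stronglyMeasurable (hFle j) (hXnm.mono hGjF) hXjint
    have hnormF' : ∀ ω, (μ[(fun ω => ‖X j ω‖)|ℱ j]) ω = ‖X j ω‖ := fun ω => by rw [hnormF]
    have hnormG : μ[(fun ω => ‖X j ω‖)|ℱ (j - 1)] =ᵐ[μ] fun _ => ∫ ω', ‖X j ω'‖ ∂μ :=
      condExp_indep_eq (hGle j) (hFle _) hXnm hindGj
    set A : Ω → ℝ := μ[η|ℱ j] with hAdef
    set B : Ω → ℝ := μ[η|ℱ (j - 1)] with hBdef
    have hAint : Integrable A μ := integrable_condExp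
    have hBint : Integrable B μ := integrable_condExp
    have hASM : StronglyMeasurable[ℱ j] A := stronglyMeasurable_condExp
    have hBSM : StronglyMeasurable[ℱ (j - 1)] B := stronglyMeasurable_condExp
    have hAbd : ∀ᵐ ω ∂μ, |A ω| ≤ ‖X j ω‖ := by
      have h1 := myAbs_condexp_le (m := ℱ j) hηi
      have h2 := condExp_mono (m := ℱ j) hηi.abs hXjint (Filter.Eventually.of_forall hη_abs)
      filter_upwards [h1, h2] with ω e1 e2
      rw [hnormF' ω] at e2
      exact e1.trans e2
    have hc₁ : (0:ℝ) ≤ ∫ ω', ‖X j ω'‖ ∂μ := integral_nonneg fun ω => norm_nonneg _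
    have hBbd : ∀ᵐ ω ∂μ, |B ω| ≤ ∫ ω', ‖X j ω'‖ ∂μ := by
      have h1 := myAbs_condexp_le (m := ℱ (j - 1)) hηi
      have h2 := condExp_mono (m := ℱ (j - 1)) hηi.abs hXjint (Filter.Eventually.of_forall hη_abs)
      filter_upwards [h1, h2, hnormG] with ω e1 e2 e3
      rw [e3] at e2
      exact e1.trans e2
    have hSeq : S = fun ω => η ω + g ω := by
      funext ω
      rw [hηdef]
      ring
    have hSF : μ[S|ℱ j] =ᵐ[μ] fun ω => A ω + (μ[g|ℱ j]) ω := by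
      have h1 : μ[S|ℱ j] = μ[(fun ω => η ω + g ω)|ℱ j] := by rw [← hSeq]
      rw [h1]
      exact condExp_add hηi hgi _
    have hSG : μ[S|ℱ (j - 1)] =ᵐ[μ] fun ω => B ω + (μ[g|ℱ (j - 1)]) ω := by
      have h1 : μ[S|ℱ (j - 1)] = μ[(fun ω => η ω + g ω)|ℱ (j - 1)] := by rw [← hSeq]
      rw [h1]
      exact condExp_add hηi hgi _
    have hxi : (fun ω => ζ j ω - ζ (j - 1) ω) =ᵐ[μ] fun ω => A ω - B ω := by
      filter_upwards [hSF, hSG, hdrop] with ω e1 e2 e3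
      simp only [hζ]
      rw [e1, e2, e3]
      ring
    constructor
    · filter_upwards [hxi, hAbd, hBbd] with ω e h1 h2
      rw [e]
      calc |A ω - B ω| ≤ |A ω| + |B ω| := abs_sub _ _
        _ ≤ ‖X j ω‖ + ∫ ω', ‖X j ω'‖ ∂μ := add_le_add h1 h2
    · by_cases hL2 : Integrable (fun ω => ‖X j ω‖ ^ 2) μ
      · -- square-integrable case
        have habs_mul : ∀ (x y : ℝ) (ω : Ω), |x| ≤ ‖X j ω‖ → |y| ≤ ‖X j ω‖ →
            |x * y| ≤ ‖X j ω‖ ^ 2 := by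
          intro x y ω hx hy
          rw [abs_mul, pow_two]
          exact mul_le_mul hx hy (abs_nonneg _) (norm_nonneg _)
        have hA_asm : AEStronglyMeasurable[m0] A μ := (hASM.mono (hFle j)).aestronglyMeasurable
        have hB_asm : AEStronglyMeasurable[m0] B μ := (hBSM.mono (hFle _)).aestronglyMeasurable
        have hη2i : Integrable (fun ω => η ω * η ω) μ :=
          hL2.mono' (hηi.1.mul hηi.1) (Filter.Eventually.of_forall fun ω => by
            rw [Real.norm_eq_abs]
            exact habs_mul _ _ ω (hη_abs ω) (hη_abs ω))
        have hAAi : Integrable (fun ω => A ω * A ω) μ := by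
          refine hL2.mono' (hA_asm.mul hA_asm) ?_
          filter_upwards [hAbd] with ω h
          rw [Real.norm_eq_abs]
          exact habs_mul _ _ ω h h
        have hAηi : Integrable (fun ω => A ω * η ω) μ := by
          refine hL2.mono' (hA_asm.mul hηi.1) ?_
          filter_upwards [hAbd] with ω h
          rw [Real.norm_eq_abs]
          exact habs_mul _ _ ω h (hη_abs ω)
        have hpullF : μ[(fun ω => A ω * η ω)|ℱ j] =ᵐ[μ] fun ω => A ω * A ω :=
          condExp_mul_of_stronglyMeasurable_left hASM hAηi hηi
        have e4 : μ[(fun ω => A ω * A ω)|ℱ j] = fun ω => A ω * A ω :=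
          condExp_of_stronglyMeasurable (hFle j) (hASM.mul hASM) hAAi
        have hJ : ∀ᵐ ω ∂μ, A ω * A ω ≤ (μ[(fun ω => η ω * η ω)|ℱ j]) ω := by
          have hnn : (0:Ω → ℝ) ≤ᵐ[μ]
              μ[(fun ω => ((η ω * η ω - A ω * η ω) - A ω * η ω) + A ω * A ω)|ℱ j] := by
            have h0 : (fun ω => ((η ω * η ω - A ω * η ω) - A ω * η ω) + A ω * A ω) =
                fun ω => (η ω - A ω) * (η ω - A ω) := by funext ω; ring
            rw [h0]
            exact condExp_nonneg (Filter.Eventually.of_forall fun ω => mul_self_nonneg _)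
          have e1 : μ[(fun ω => η ω * η ω - A ω * η ω)|ℱ j] =ᵐ[μ]
              fun ω => (μ[(fun ω => η ω * η ω)|ℱ j]) ω - (μ[(fun ω => A ω * η ω)|ℱ j]) ω :=
            condExp_sub hη2i hAηi _
          have e2 : μ[(fun ω => (η ω * η ω - A ω * η ω) - A ω * η ω)|ℱ j] =ᵐ[μ]
              fun ω => (μ[(fun ω => η ω * η ω - A ω * η ω)|ℱ j]) ω
                - (μ[(fun ω => A ω * η ω)|ℱ j]) ω :=
            condExp_sub (hη2i.sub hAηi) hAηi _
          have e3 : μ[(fun ω => ((η ω * η ω - A ω * η ω) - A ω * η ω) + A ω * A ω)|ℱ j] =ᵐ[μ]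
              fun ω => (μ[(fun ω => (η ω * η ω - A ω * η ω) - A ω * η ω)|ℱ j]) ω
                + (μ[(fun ω => A ω * A ω)|ℱ j]) ω :=
            condExp_add ((hη2i.sub hAηi).sub hAηi) hAAi _
          have e4' : ∀ ω, (μ[(fun ω => A ω * A ω)|ℱ j]) ω = A ω * A ω := fun ω => by rw [e4]
          filter_upwards [hnn, e1, e2, e3, hpullF] with ω f0 f1 f2 f3 f5
          rw [Pi.zero_apply] at f0
          rw [f3, f2, f1, f5, e4' ω] at f0
          linarith
        have hBAi : Integrable (fun ω => B ω * A ω) μ := by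
          refine (hXjint.const_mul (∫ ω', ‖X j ω'‖ ∂μ)).mono' (hB_asm.mul hA_asm) ?_
          filter_upwards [hBbd, hAbd] with ω h1 h2
          rw [Real.norm_eq_abs, abs_mul]
          exact mul_le_mul h1 h2 (abs_nonneg _) hc₁
        have hBBi : Integrable (fun ω => B ω * B ω) μ := by
          refine (integrable_const ((∫ ω', ‖X j ω'‖ ∂μ) * (∫ ω', ‖X j ω'‖ ∂μ))).mono'
            (hB_asm.mul hB_asm) ?_
          filter_upwards [hBbd] with ω h1
          rw [Real.norm_eq_abs, abs_mul]
          exact mul_le_mul h1 h1 (abs_nonneg _) hc₁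
        have hpullG : μ[(fun ω => B ω * A ω)|ℱ (j - 1)] =ᵐ[μ]
            fun ω => B ω * (μ[A|ℱ (j - 1)]) ω :=
          condExp_mul_of_stronglyMeasurable_left hBSM hBAi hAint
        have htow : μ[A|ℱ (j - 1)] =ᵐ[μ] B := condExp_condExp_of_le hle (hFle j)
        have g1 : μ[(fun ω => A ω * A ω - B ω * A ω)|ℱ (j - 1)] =ᵐ[μ]
            fun ω => (μ[(fun ω => A ω * A ω)|ℱ (j - 1)]) ω
              - (μ[(fun ω => B ω * A ω)|ℱ (j - 1)]) ω :=
          condExp_sub hAAi hBAi _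
        have g2 : μ[(fun ω => (A ω * A ω - B ω * A ω) - B ω * A ω)|ℱ (j - 1)] =ᵐ[μ]
            fun ω => (μ[(fun ω => A ω * A ω - B ω * A ω)|ℱ (j - 1)]) ω
              - (μ[(fun ω => B ω * A ω)|ℱ (j - 1)]) ω :=
          condExp_sub (hAAi.sub hBAi) hBAi _
        have g3 : μ[(fun ω => ((A ω * A ω - B ω * A ω) - B ω * A ω) + B ω * B ω)|ℱ (j - 1)]
            =ᵐ[μ] fun ω =>
              (μ[(fun ω => (A ω * A ω - B ω * A ω) - B ω * A ω)|ℱ (j - 1)]) ω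
                + (μ[(fun ω => B ω * B ω)|ℱ (j - 1)]) ω :=
          condExp_add ((hAAi.sub hBAi).sub hBAi) hBBi _
        have g4 : μ[(fun ω => B ω * B ω)|ℱ (j - 1)] = fun ω => B ω * B ω :=
          condExp_of_stronglyMeasurable (hFle _) (hBSM.mul hBSM) hBBi
        have g4' : ∀ ω, (μ[(fun ω => B ω * B ω)|ℱ (j - 1)]) ω = B ω * B ω := fun ω => by
          rw [g4]
        have g5 : μ[(fun ω => A ω * A ω)|ℱ (j - 1)] ≤ᵐ[μ]
            μ[μ[(fun ω => η ω * η ω)|ℱ j]|ℱ (j - 1)] :=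
          condExp_mono hAAi integrable_condExp hJ
        have g6 : μ[μ[(fun ω => η ω * η ω)|ℱ j]|ℱ (j - 1)] =ᵐ[μ]
            μ[(fun ω => η ω * η ω)|ℱ (j - 1)] :=
          condExp_condExp_of_le hle (hFle j)
        have g7 : μ[(fun ω => η ω * η ω)|ℱ (j - 1)] ≤ᵐ[μ] μ[(fun ω => ‖X j ω‖ ^ 2)|ℱ (j - 1)] :=
          condExp_mono hη2i hL2 (Filter.Eventually.of_forall fun ω =>
            (le_abs_self _).trans (habs_mul _ _ ω (hη_abs ω) (hη_abs ω)))
        have hXsqSM : StronglyMeasurable[𝒢 j] fun ω => ‖X j ω‖ ^ 2 := wNormSqSM hXjmeas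
        have g8 : μ[(fun ω => ‖X j ω‖ ^ 2)|ℱ (j - 1)] =ᵐ[μ] fun _ => ∫ ω', ‖X j ω'‖ ^ 2 ∂μ :=
          condExp_indep_eq (hGle j) (hFle _) hXsqSM hindGj
        have hcg : μ[(fun ω' => (ζ j ω' - ζ (j - 1) ω') ^ 2)|ℱ (j - 1)] =ᵐ[μ]
            μ[(fun ω => ((A ω * A ω - B ω * A ω) - B ω * A ω) + B ω * B ω)|ℱ (j - 1)] := by
          refine condExp_congr_ae ?_
          filter_upwards [hxi] with ω h
          have h' : ζ j ω - ζ (j - 1) ω = A ω - B ω := h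
          rw [h']
          ring
        filter_upwards [hcg, g1, g2, g3, g5, g6, g7, g8, hpullG, htow] with ω
          c0 c1 c2 c3 c5 c6 c7 c8 c9 c10
        rw [c0, c3, c2, c1, c9, c10, g4' ω]
        have hBnn := mul_self_nonneg (B ω)
        rw [c8] at c7
        have := c5.trans (le_of_eq c6)
        linarith [this.trans c7]
      · -- non-square-integrable case
        rw [integral_undef hL2]
        have hni : ¬ Integrable (fun ω' => (ζ j ω' - ζ (j - 1) ω') ^ 2) μ := by
          intro hcon
          apply hL2
          set D : Ω → ℝ := μ[g|ℱ (j - 1)] with hDdef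
          have hlow : ∀ᵐ ω ∂μ, ‖X j ω‖ - 2 * D ω ≤ A ω := by
            have l1 : μ[(fun ω => ‖X j ω‖ - 2 * g ω)|ℱ j] ≤ᵐ[μ] μ[η|ℱ j] :=
              condExp_mono (hXjint.sub (hgi.const_mul 2)) hηi
                (Filter.Eventually.of_forall hη_low)
            have l2 : μ[(fun ω => ‖X j ω‖ - 2 * g ω)|ℱ j] =ᵐ[μ]
                fun ω => (μ[(fun ω => ‖X j ω‖)|ℱ j]) ω - (μ[(fun ω => 2 * g ω)|ℱ j]) ω :=
              condExp_sub hXjint (hgi.const_mul 2) _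
            have l3 : μ[(fun ω => 2 * g ω)|ℱ j] =ᵐ[μ] fun ω => 2 * (μ[g|ℱ j]) ω :=
              condExp_smul (2:ℝ) g _
            filter_upwards [l1, l2, l3, hdrop] with ω f1 f2 f3 f4
            rw [f2, f3, f4, hnormF' ω] at f1
            exact f1
          have hK : ∃ K : ℕ, μ {ω | |D ω| ≤ (K:ℝ)} ≠ 0 := by
            by_contra hnone
            push_neg at hnone
            have hcover : (Set.univ : Set Ω) ⊆ ⋃ K : ℕ, {ω | |D ω| ≤ (K:ℝ)} := by
              intro ω _
              obtain ⟨K, hKω⟩ := exists_nat_ge |D ω|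
              exact Set.mem_iUnion.2 ⟨K, hKω⟩
            have h0 : μ Set.univ = 0 :=
              measure_mono_null hcover (measure_iUnion_null fun K => hnone K)
            rw [measure_univ] at h0
            exact one_ne_zero h0
          obtain ⟨K, hKne⟩ := hK
          set T : Set Ω := {ω | |D ω| ≤ (K:ℝ)} with hTdef
          have hDmeas : Measurable[ℱ (j - 1)] D := stronglyMeasurable_condExp.measurable
          have hTG : MeasurableSet[ℱ (j - 1)] T := wAbsIic hDmeas _
          have hTm0 : MeasurableSet[m0] T := hFle (j - 1) _ hTG
          set R : ℝ := 2 * (K:ℝ) + ∫ ω', ‖X j ω'‖ ∂μ with hRdef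
          have hball : ∀ᵐ ω ∂μ, ‖T.indicator (fun ω => ‖X j ω‖ ^ 2) ω‖ ≤
              2 * (ζ j ω - ζ (j - 1) ω) ^ 2 + 2 * R ^ 2 := by
            filter_upwards [hlow, hBbd, hxi] with ω h1 h2 h3
            rw [Real.norm_eq_abs,
              abs_of_nonneg (Set.indicator_apply_nonneg fun _ => by positivity)]
            by_cases hω : ω ∈ T
            · rw [Set.indicator_of_mem hω]
              have hDb : |D ω| ≤ (K:ℝ) := hω
              have h3' : ζ j ω - ζ (j - 1) ω = A ω - B ω := h3
              have hXb : ‖X j ω‖ ≤ (ζ j ω - ζ (j - 1) ω) + R := by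
                have hBu := (abs_le.1 h2).2
                have hDu := (abs_le.1 hDb).2
                rw [hRdef]
                have hA : A ω = (ζ j ω - ζ (j - 1) ω) + B ω := by rw [h3']; ring
                linarith
              nlinarith [norm_nonneg (X j ω), sq_nonneg ((ζ j ω - ζ (j - 1) ω) - R),
                sq_nonneg ((ζ j ω - ζ (j - 1) ω) + R)]
            · rw [Set.indicator_of_notMem hω]
              positivity
          have hφint : Integrable (T.indicator fun ω => ‖X j ω‖ ^ 2) μ := by
            refine ((hcon.const_mul 2).add (integrable_const (2 * R ^ 2))).mono'
              (wIndASM (wNormSqASM ((hmeas j).mono le_rfl le_rfl)) hTm0) ?_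
            filter_upwards [hball] with ω h
            exact h
          set gE : Ω → ℝ≥0∞ := fun ω => ENNReal.ofReal (‖X j ω‖ ^ 2) with hgE
          have hgEmeas : Measurable[𝒢 j] gE := wOfRealSq hXjmeas
          have hfEmeas : Measurable[ℱ (j - 1)] (T.indicator (fun _ => (1:ℝ≥0∞))) :=
            wConstIndMeas hTG
          have hkey := lintegral_mul_eq_lintegral_mul_lintegral_of_independent_measurableSpace
            (hFle (j - 1)) (hGle j) hindGj.symm hfEmeas hgEmeas
          have hptw : ∀ ω, T.indicator (fun _ => (1:ℝ≥0∞)) ω * gE ω = T.indicator gE ω := by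
            intro ω
            by_cases hω : ω ∈ T <;> simp [hω]
          have hnne : ∀ ω, ‖T.indicator (fun ω => ‖X j ω‖ ^ 2) ω‖ₑ =
              T.indicator gE ω := by
            intro ω
            by_cases hω : ω ∈ T
            · rw [Set.indicator_of_mem hω, Set.indicator_of_mem hω, hgE]
              exact Real.enorm_eq_ofReal (by positivity)
            · rw [Set.indicator_of_notMem hω, Set.indicator_of_notMem hω]
              simp
          have hfin : ∫⁻ ω, T.indicator gE ω ∂μ < ⊤ := by
            have h2 : ∫⁻ ω, ‖T.indicator (fun ω => ‖X j ω‖ ^ 2) ω‖ₑ ∂μ < ⊤ := hφint.2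
            rwa [lintegral_congr hnne] at h2
          have hμT : μ T ≠ 0 := hKne
          have hgEfin : ∫⁻ ω, gE ω ∂μ < ⊤ := by
            by_contra htop
            rw [not_lt, top_le_iff] at htop
            have h1 : ∫⁻ ω, T.indicator (fun _ => (1:ℝ≥0∞)) ω * gE ω ∂μ < ⊤ := by
              rw [lintegral_congr hptw]
              exact hfin
            rw [hkey, htop] at h1
            have h2 : ∫⁻ ω, T.indicator (fun _ => (1:ℝ≥0∞)) ω ∂μ = μ T := by
              rw [wLintInd hTm0]
              simp
            rw [h2, ENNReal.mul_top hμT] at h1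
            exact lt_irrefl _ h1
          refine ⟨wNormSqASM ((hmeas j).mono le_rfl le_rfl), ?_⟩
          have hnn2 : ∫⁻ ω, ‖(‖X j ω‖ ^ 2 : ℝ)‖ₑ ∂μ = ∫⁻ ω, gE ω ∂μ :=
            lintegral_congr fun ω => by
              rw [hgE]
              exact Real.enorm_eq_ofReal (by positivity)
          show ∫⁻ ω, ‖(‖X j ω‖ ^ 2 : ℝ)‖ₑ ∂μ < ⊤
          rw [hnn2]
          exact hgEfin
        rw [condExp_of_not_integrable hni]
        exact Filter.Eventually.of_forall fun ω => by simp
  refine ⟨?_, ?_, ?_, fun j hj => (hmain j hj).1, fun j hj => (hmain j hj).2⟩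
  · -- ζ 0 = 0
    have h0 : ℱ 0 = ⊥ := by
      rw [hFeq 0]
      have he : Set.Icc 1 0 = (∅ : Set ℕ) := Set.Icc_eq_empty (by omega)
      rw [he]
      exact iSup_emptyset
    refine Filter.Eventually.of_forall fun ω => ?_
    simp only [hζ, h0, condExp_bot, Pi.zero_apply, sub_self]
  · -- ζ n = S - E S
    have hSMn : StronglyMeasurable[ℱ n] S := by
      rw [hS]
      refine hSM _ _ fun i hi => ?_
      rw [hFeq n]
      exact le_biSup _ (Set.mem_Icc.2 (Finset.mem_Icc.1 hi))
    have hce : μ[S|ℱ n] = S := condExp_of_stronglyMeasurable (hFle n) hSMn hSint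
    refine Filter.Eventually.of_forall fun ω => ?_
    simp only [hζ, hce]
  · -- martingale property
    intro j hj
    have hle : ℱ (j - 1) ≤ ℱ j := hFmono _ _ (by omega)
    simp only [hζ]
    have h2 : μ[(fun ω => (μ[S|ℱ j]) ω - ∫ ω', S ω' ∂μ) | ℱ (j-1)] =ᵐ[μ]
        fun ω => (μ[μ[S|ℱ j] | ℱ (j-1)]) ω - (μ[(fun _ => ∫ ω', S ω' ∂μ) | ℱ (j-1)]) ω :=
      condExp_sub integrable_condExp (integrable_const _) _
    have h3 : μ[μ[S|ℱ j] | ℱ (j-1)] =ᵐ[μ] μ[S|ℱ (j-1)] := condExp_condExp_of_le hle (hFle j)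
    have h4 : μ[(fun _ => ∫ ω', S ω' ∂μ) | ℱ (j-1)] = fun _ => ∫ ω', S ω' ∂μ :=
      condExp_const (hFle _) _
    filter_upwards [h2, h3] with ω e2 e3
    rw [e2, e3, h4]
end

section
/- For p ≥ 2, the function q_p : [0,1] → ℝ defined by q_p(α) = √(pα+1) · exp(½ · (pα - 2p)/(pα + 1)) is continuous, strictly increasing, and maps [0,1] onto the interval [e^{-p}, √(p+1) · exp(-p/(2(p+1)))]. -/
theorem stmt_19 (p : ℝ) (hp : 2 ≤ p)
    (qp : ℝ → ℝ)
    (hqp : qp = fun α => Real.sqrt (p * α + 1) *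
      Real.exp (1 / 2 * ((p * α - 2 * p) / (p * α + 1)))) :
    ContinuousOn qp (Set.Icc 0 1) ∧ StrictMonoOn qp (Set.Icc 0 1) ∧
      qp '' Set.Icc 0 1 =
        Set.Icc (Real.exp (-p)) (Real.sqrt (p + 1) * Real.exp (-p / (2 * (p + 1)))) := by
  have hp0 : (0:ℝ) < p := by linarith
  have hden : ∀ x ∈ Set.Icc (0:ℝ) 1, p * x + 1 ≠ 0 := by
    rintro x ⟨hx0, hx1⟩
    nlinarith
  have hcont : ContinuousOn qp (Set.Icc 0 1) := by
    rw [hqp]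
    apply ContinuousOn.mul
    · exact (Real.continuous_sqrt.comp_continuousOn
        (by fun_prop : ContinuousOn (fun x : ℝ => p * x + 1) (Set.Icc 0 1)))
    · apply Real.continuous_exp.comp_continuousOn
      apply ContinuousOn.mul continuousOn_const
      exact ContinuousOn.div (by fun_prop) (by fun_prop) hden
  have hmono : StrictMonoOn qp (Set.Icc 0 1) := by
    rw [hqp]
    rintro x ⟨hx0, hx1⟩ y ⟨hy0, hy1⟩ hxy
    have hdx : (0:ℝ) < p * x + 1 := by nlinarith
    have hdy : (0:ℝ) < p * y + 1 := by nlinarith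
    have hsq : Real.sqrt (p * x + 1) < Real.sqrt (p * y + 1) := by
      apply Real.sqrt_lt_sqrt (by positivity)
      nlinarith
    have hfrac : (p * x - 2 * p) / (p * x + 1) < (p * y - 2 * p) / (p * y + 1) := by
      rw [div_lt_div_iff₀ hdx hdy]
      nlinarith [mul_lt_mul_of_pos_left hxy (by nlinarith : (0:ℝ) < p * (1 + 2 * p))]
    have hexp : Real.exp (1 / 2 * ((p * x - 2 * p) / (p * x + 1))) <
        Real.exp (1 / 2 * ((p * y - 2 * p) / (p * y + 1))) := by
      apply Real.exp_lt_exp.2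
      linarith
    have h1 : (0:ℝ) ≤ Real.sqrt (p * x + 1) := Real.sqrt_nonneg _
    have h2 : (0:ℝ) < Real.exp (1 / 2 * ((p * x - 2 * p) / (p * x + 1))) := Real.exp_pos _
    exact mul_lt_mul'' hsq hexp h1 h2.le
  refine ⟨hcont, hmono, ?_⟩
  have h0 : qp 0 = Real.exp (-p) := by
    rw [hqp]; simp
  have h1 : qp 1 = Real.sqrt (p + 1) * Real.exp (-p / (2 * (p + 1))) := by
    rw [hqp]
    simp only
    congr 1
    · ring_nf
    · congr 1
      have h : p * 1 + 1 ≠ 0 := by nlinarith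
      field_simp
      ring
  rw [← h0, ← h1]
  apply Set.Subset.antisymm
  · rintro y ⟨x, hx, rfl⟩
    exact ⟨hmono.monotoneOn (Set.left_mem_Icc.2 zero_le_one) hx hx.1,
      hmono.monotoneOn hx (Set.right_mem_Icc.2 zero_le_one) hx.2⟩
  · exact intermediate_value_Icc zero_le_one hcont
end
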